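/- Let x_1,...,x_N and y_1,...,y_N be complex numbers, with the x_i pairwise distinct, the y_j pairwise distinct, and x_i ≠ y_j for all i,j. Then the numbers a_k = (∏_{i=1}^N (x_k - y_i)) / (∏_{i≠k} (x_k - x_i)) satisfy ∑_{i=1}^N a_i/(y_j - x_i) = -1 for every j = 1,...,N. -/

import Mathlib

open Polynomial Finset

/-- Explicit solution of the Cauchy system with right-hand side `-1`. -/
theorem stmt_1 (N : ℕ) (x y : Fin N → ℂ)
    (hx : Function.Injective x) (hy : Function.Injective y)
    (hxy : ∀ i j, x i ≠ y j)
    (a : Fin N → ℂ)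
    (ha : ∀ k, a k = (∏ i, (x k - y i)) / (∏ i ∈ Finset.univ.erase k, (x k - x i))) :
    ∀ j, ∑ i, a i / (y j - x i) = -1 := by
  intro j
  classical
  set P : ℂ[X] := ∏ i, (X - C (x i)) with hP
  set Q : ℂ[X] := ∏ i, (X - C (y i)) with hQ
  have hPm : P.Monic := by
    rw [hP]; exact monic_prod_of_monic _ _ fun i _ => monic_X_sub_C _
  have hQm : Q.Monic := by
    rw [hQ]; exact monic_prod_of_monic _ _ fun i _ => monic_X_sub_C _
  have hPd : P.natDegree = N := by
    rw [hP, natDegree_prod_of_monic _ _ fun i _ => monic_X_sub_C _]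
    simp
  have hQd : Q.natDegree = N := by
    rw [hQ, natDegree_prod_of_monic _ _ fun i _ => monic_X_sub_C _]
    simp
  have hdeg : (Q - P).degree < (#(univ : Finset (Fin N)) : WithBot ℕ) := by
    rw [Finset.card_fin]
    by_cases hQP : Q = P
    · simp [hQP, degree_zero]
    · have := degree_sub_lt (p := Q) (q := P)
        (by rw [degree_eq_natDegree hQm.ne_zero,
                degree_eq_natDegree hPm.ne_zero, hPd, hQd])
        hQm.ne_zero (by rw [hPm.leadingCoeff, hQm.leadingCoeff])
      rwa [degree_eq_natDegree hQm.ne_zero, hQd] at this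
  have key := Lagrange.eq_interpolate (s := univ) (v := x)
    (f := Q - P) (hx.injOn) hdeg
  have hev := congrArg (eval (y j)) key
  have hx0 : ∀ i : Fin N, (∏ m, (x i - x m)) = 0 := fun i =>
    Finset.prod_eq_zero (mem_univ i) (sub_self _)
  have hy0 : (∏ m, (y j - y m)) = 0 := Finset.prod_eq_zero (mem_univ j) (sub_self _)
  simp only [Lagrange.interpolate_apply, Lagrange.basis, Lagrange.basisDivisor,
    eval_finset_sum, eval_mul, eval_C, eval_prod, eval_sub, eval_X, hP, hQ,
    hx0, hy0, sub_zero, zero_sub] at hev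
  -- hev : ∑ i, (∏ m, (x i - y m)) * ∏ m ∈ univ.erase i, ((x i - x m)⁻¹ * (y j - x m))
  --        = - ∏ m, (y j - x m)
  have hE : (∏ m, (y j - x m)) ≠ 0 :=
    Finset.prod_ne_zero_iff.2 fun m _ => sub_ne_zero.2 (Ne.symm (hxy m j))
  have hterm : ∀ i : Fin N, a i / (y j - x i)
      = (∏ m, (x i - y m)) * (∏ m ∈ univ.erase i, ((x i - x m)⁻¹ * (y j - x m)))
        / ∏ m, (y j - x m) := by
    intro i
    have hD : (∏ m ∈ univ.erase i, (x i - x m)) ≠ 0 :=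
      Finset.prod_ne_zero_iff.2 fun m hm =>
        sub_ne_zero.2 fun h => (mem_erase.1 hm).1 (hx h).symm
    have hEi : (∏ m, (y j - x m)) = (y j - x i) * ∏ m ∈ univ.erase i, (y j - x m) :=
      (Finset.mul_prod_erase _ _ (mem_univ i)).symm
    have hyi : y j - x i ≠ 0 := sub_ne_zero.2 (Ne.symm (hxy i j))
    have hE' : (∏ m ∈ univ.erase i, (y j - x m)) ≠ 0 :=
      Finset.prod_ne_zero_iff.2 fun m _ => sub_ne_zero.2 (Ne.symm (hxy m j))
    rw [ha, Finset.prod_mul_distrib, hEi]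
    field_simp
    rw [Finset.prod_div_distrib, prod_const_one, mul_assoc, ← div_eq_mul_one_div, div_self hD, mul_one]
  rw [Finset.sum_congr rfl fun i _ => hterm i, ← Finset.sum_div, ← hev, neg_div,
    div_self hE]
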